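/- Let M be the compact topological monoid 𝕋 × ℕ∞, where ℕ∞ = ℕ ∪ {∞} carries the one-point-compactification topology of the discrete space ℕ, with multiplication (z₁, n₁)·(z₂, n₂) = (z₁z₂, min(n₁, n₂)) and unit (1, ∞). A Borel probability measure μ on M is idempotent (μ⋆μ = μ) if and only if there exist n ∈ ℕ∞ and an idempotent Borel probability measure ρ on 𝕋 such that μ is the product measure ρ × δ_n, where δ_n is the Dirac measure at n. -/

import Mathlib

open MeasureTheory

noncomputable section

instance : MeasurableSpace Circle := borel Circle

/-- `ℕ∞ = ℕ ∪ {∞}` carries the one-point-compactification topology of the discrete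
space `ℕ` (the order topology); we equip it with the Borel σ-algebra. -/
instance : MeasurableSpace ℕ∞ := borel ℕ∞

/-- The compact topological monoid `M = 𝕋 × ℕ∞` with multiplication
`(z₁,n₁)·(z₂,n₂) = (z₁z₂, min n₁ n₂)` and unit `(1, ∞)`. Convolution of measures on `M`:
the pushforward of the product measure under multiplication. -/
def convM (μ ν : Measure (Circle × ℕ∞)) : Measure (Circle × ℕ∞) :=
  Measure.map (fun p : (Circle × ℕ∞) × (Circle × ℕ∞) => (p.1.1 * p.2.1, min p.1.2 p.2.2))
    (μ.prod ν)

/-- Convolution of measures on the circle group `𝕋`. -/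
def convT (μ ν : Measure Circle) : Measure Circle :=
  Measure.map (fun p : Circle × Circle => p.1 * p.2) (μ.prod ν)

instance : BorelSpace Circle := ⟨rfl⟩
instance : BorelSpace ℕ∞ := ⟨rfl⟩

lemma measurable_mulC : Measurable (fun p : Circle × Circle => p.1 * p.2) := by
  measurability

lemma measurable_minE : Measurable (fun p : ℕ∞ × ℕ∞ => min p.1 p.2) :=
  measurable_of_countable _

lemma measurable_minM :
    Measurable (fun p : (Circle × ℕ∞) × (Circle × ℕ∞) => min p.1.2 p.2.2) :=
  measurable_minE.comp (measurable_fst.snd.prodMk measurable_snd.snd)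

lemma measurable_mulM :
    Measurable (fun p : (Circle × ℕ∞) × (Circle × ℕ∞) => (p.1.1 * p.2.1, min p.1.2 p.2.2)) :=
  (measurable_mulC.comp (measurable_fst.fst.prodMk measurable_snd.fst)).prodMk
    measurable_minM

/-- A Borel probability measure `μ` on the compact monoid `M = 𝕋 × ℕ∞` is idempotent if
and only if `μ = ρ × δ_n` for some `n ∈ ℕ∞` and some idempotent Borel probability
measure `ρ` on `𝕋`. -/
theorem idempotent_measures_on_M (μ : Measure (Circle × ℕ∞))
    (hμ : IsProbabilityMeasure μ) :
    convM μ μ = μ ↔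
      ∃ (n : ℕ∞) (ρ : Measure Circle), IsProbabilityMeasure ρ ∧ convT ρ ρ = ρ ∧
        μ = ρ.prod (Measure.dirac n) := by
  constructor
  · intro h
    set ν := Measure.map Prod.snd μ with hνdef
    haveI hνp : IsProbabilityMeasure ν := Measure.isProbabilityMeasure_map measurable_snd.aemeasurable
    -- ν is idempotent under min-convolution; on Ici sets this gives ν(Ici k) = ν(Ici k)²
    have key : ∀ k : ℕ∞, ν (Set.Ici k) = ν (Set.Ici k) * ν (Set.Ici k) := by
      intro k
      have hpre : (fun p : (Circle × ℕ∞) × (Circle × ℕ∞) => min p.1.2 p.2.2) ⁻¹' Set.Ici k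
          = (Prod.snd ⁻¹' Set.Ici k) ×ˢ (Prod.snd ⁻¹' Set.Ici k) := by
        ext p; simp [le_min_iff]
      calc ν (Set.Ici k) = (Measure.map Prod.snd (convM μ μ)) (Set.Ici k) := by rw [h]
        _ = (Measure.map (fun p : (Circle × ℕ∞) × (Circle × ℕ∞) => min p.1.2 p.2.2)
              (μ.prod μ)) (Set.Ici k) := by
            rw [convM, Measure.map_map measurable_snd measurable_mulM]; rfl
        _ = (μ.prod μ) ((Prod.snd ⁻¹' Set.Ici k) ×ˢ (Prod.snd ⁻¹' Set.Ici k)) := by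
            rw [Measure.map_apply measurable_minM measurableSet_Ici, hpre]
        _ = ν (Set.Ici k) * ν (Set.Ici k) := by
            rw [Measure.prod_prod, ← Measure.map_apply measurable_snd measurableSet_Ici]
    have h01 : ∀ k : ℕ∞, ν (Set.Ici k) = 0 ∨ ν (Set.Ici k) = 1 := by
      intro k
      rcases eq_or_ne (ν (Set.Ici k)) 0 with h0 | h0
      · exact Or.inl h0
      · exact Or.inr ((ENNReal.mul_right_inj h0 (measure_ne_top ν _)).1
          (by rw [mul_one, ← key k]))
    have hIci0 : ν (Set.Ici (0 : ℕ∞)) = 1 := by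
      have : Set.Ici (0 : ℕ∞) = Set.univ := by ext x; simp [zero_le]
      rw [this]; exact measure_univ
    -- find n with ν {n} = 1
    obtain ⟨n, hn⟩ : ∃ n : ℕ∞, ν {n} = 1 := by
      by_cases hall : ∀ k : ℕ, ν (Set.Ici (k : ℕ∞)) = 1
      · refine ⟨⊤, ?_⟩
        have hI : (⋂ k : ℕ, Set.Ici ((k : ℕ) : ℕ∞)) = {⊤} := by
          ext x
          simp only [Set.mem_iInter, Set.mem_Ici, Set.mem_singleton_iff]
          constructor
          · intro hx
            by_contra hne
            lift x to ℕ using hne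
            exact absurd (hx (x + 1)) (by exact_mod_cast Nat.not_succ_le_self x)
          · rintro rfl k; exact le_top
        have := Antitone.measure_iInter (μ := ν) (s := fun k : ℕ => Set.Ici ((k : ℕ) : ℕ∞))
          (fun i j hij => Set.Ici_subset_Ici.2 (by exact_mod_cast hij))
          (fun k => measurableSet_Ici.nullMeasurableSet)
          ⟨0, measure_ne_top _ _⟩
        rw [← hI, this]
        simp [hall]
      · push_neg at hall
        classical
        set k := Nat.find hall with hkdef
        have hk0 : ν (Set.Ici ((k : ℕ) : ℕ∞)) = 0 :=
          (h01 _).resolve_right (Nat.find_spec hall)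
        have hkpos : k ≠ 0 := by
          intro hk
          apply Nat.find_spec hall
          rw [← hkdef, hk]
          simpa using hIci0
        set m := k - 1 with hmdef
        have hmk : m + 1 = k := by omega
        have hm1 : ν (Set.Ici ((m : ℕ) : ℕ∞)) = 1 :=
          not_ne_iff.1 (Nat.find_min hall (by omega))
        refine ⟨(m : ℕ∞), ?_⟩
        have hset : ({(m : ℕ∞)} : Set ℕ∞)
            = Set.Ici ((m : ℕ) : ℕ∞) \ Set.Ici (((m + 1 : ℕ) : ℕ∞)) := by
          ext x
          induction x using ENat.recTopCoe with
          | top => simp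
          | coe j =>
            simp only [Set.mem_singleton_iff, Set.mem_diff, Set.mem_Ici, Nat.cast_le,
              Nat.cast_inj, not_le, Nat.cast_lt]
            omega
        have hsub : Set.Ici (((m + 1 : ℕ) : ℕ∞)) ⊆ Set.Ici ((m : ℕ) : ℕ∞) :=
          Set.Ici_subset_Ici.2 (by exact_mod_cast Nat.le_succ m)
        rw [hset, measure_diff hsub measurableSet_Ici.nullMeasurableSet (measure_ne_top _ _),
          hm1, hmk, hk0]
        simp
    -- μ is concentrated on Circle × {n}
    have hane : ∀ᵐ p ∂μ, p.2 = n := by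
      rw [ae_iff]
      have hco : {p : Circle × ℕ∞ | ¬ p.2 = n} = Prod.snd ⁻¹' ({n}ᶜ) := rfl
      rw [hco, ← Measure.map_apply measurable_snd (measurableSet_singleton n).compl]
      exact (prob_compl_eq_zero_iff (measurableSet_singleton n)).2 hn
    have hae : (id : Circle × ℕ∞ → Circle × ℕ∞) =ᵐ[μ] (fun p => (p.1, n)) :=
      hane.mono fun p hp => by simp [Prod.ext_iff, hp]
    set ρ := Measure.map Prod.fst μ with hρdef
    haveI hρp : IsProbabilityMeasure ρ := Measure.isProbabilityMeasure_map measurable_fst.aemeasurable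
    have hi : Measurable (fun x : Circle => (x, n)) := measurable_id.prodMk measurable_const
    have hμeq : μ = ρ.prod (Measure.dirac n) := by
      have h1 : Measure.map (fun x : Circle => (x, n)) ρ
          = Measure.map (fun p : Circle × ℕ∞ => (p.1, n)) μ := by
        rw [hρdef, Measure.map_map hi measurable_fst]
        rfl
      rw [Measure.prod_dirac, h1, ← Measure.map_congr hae, Measure.map_id]
    refine ⟨n, ρ, hρp, ?_, hμeq⟩
    have hmap : Measure.map Prod.fst (convM μ μ) = convT ρ ρ := by
      rw [convM, convT, Measure.map_map measurable_fst measurable_mulM, hρdef,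
        Measure.map_prod_map _ _ measurable_fst measurable_fst,
        Measure.map_map measurable_mulC (measurable_fst.prodMap measurable_fst)]
      rfl
    rw [h] at hmap
    exact hmap.symm
  · rintro ⟨n, ρ, hρp, hρi, rfl⟩
    haveI := hρp
    have hi : Measurable (fun x : Circle => (x, n)) := measurable_id.prodMk measurable_const
    rw [Measure.prod_dirac, convM,
      Measure.map_prod_map _ _ hi hi,
      Measure.map_map measurable_mulM (hi.prodMap hi)]
    have hcomp : (fun p : (Circle × ℕ∞) × (Circle × ℕ∞) => (p.1.1 * p.2.1, min p.1.2 p.2.2))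
        ∘ (Prod.map (fun x : Circle => (x, n)) (fun x : Circle => (x, n)))
        = (fun x : Circle => (x, n)) ∘ (fun p : Circle × Circle => p.1 * p.2) := by
      funext p; simp [Prod.map]
    rw [hcomp, ← Measure.map_map hi measurable_mulC, ← convT, hρi]

end
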